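/- Let $0<p<q=\infty$ and $\lambda=(\lambda_k)_{k\in\mathbb{N}}$ a positive non-increasing sequence. Then for every $n\in\mathbb{N}$, $\sigma_n(T_\lambda:\ell_p(\mathbb{N})\to\ell_\infty(\mathbb{N}),\mathcal{E}) = \left(\sum_{k=1}^{n+1}\lambda_k^{-p}\right)^{-1/p}$. -/

import Mathlib

/-- Best `n`-term approximation width of the diagonal operator
`T_λ : ℓ_p → ℓ_∞` with respect to the canonical basis dictionary:
`σ_n = sup_{‖ξ‖_p ≤ 1} inf_{|Γ| = n} sup_{k ∉ Γ} |λ_k ξ_k|`.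
Sequences are indexed by `ℕ = {0, 1, 2, …}` (so `λ_1` corresponds to `l 0`, etc.). -/
noncomputable def sigmaWInf (p : ℝ) (l : ℕ → ℝ) (n : ℕ) : ℝ :=
  sSup { s : ℝ | ∃ ξ : ℕ → ℂ,
    Summable (fun k => ‖ξ k‖ ^ p) ∧ (∑' k, ‖ξ k‖ ^ p) ≤ 1 ∧
    s = sInf { t : ℝ | ∃ Γ : Finset ℕ, Γ.card = n ∧
      t = ⨆ k : { k : ℕ // k ∉ Γ }, ‖(l (k : ℕ) : ℂ) * ξ (k : ℕ)‖ } }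

/-- A strictly monotone map `Fin m → ℕ` satisfies `i ≤ g i`. -/
lemma strictMono_fin_nat_le {m : ℕ} {g : Fin m → ℕ} (hg : StrictMono g) (i : Fin m) :
    (i : ℕ) ≤ g i := by
  obtain ⟨v, hv⟩ := i
  induction v with
  | zero => exact Nat.zero_le _
  | succ w ih =>
      have hw : w < m := Nat.lt_of_succ_lt hv
      have h1 : g ⟨w, hw⟩ < g ⟨w + 1, hv⟩ := hg (by simp [Fin.lt_def])
      have h2 := ih hw
      simpa using Nat.lt_of_le_of_lt h2 h1

/-- For a monotone `f : ℕ → ℝ` and a finset `F` of naturals of cardinality `m`,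
the sum of `f` over `range m` is at most the sum over `F`. -/
lemma sum_range_le_sum_finset {f : ℕ → ℝ} (hf : Monotone f) (F : Finset ℕ) {m : ℕ}
    (h : F.card = m) : ∑ i ∈ Finset.range m, f i ≤ ∑ k ∈ F, f k := by
  have he : ∑ k ∈ F, f k = ∑ i : Fin m, f (F.orderEmbOfFin h i) := by
    refine (Finset.sum_bij (fun i _ => F.orderEmbOfFin h i) ?_ ?_ ?_ ?_).symm
    · intro i _; exact F.orderEmbOfFin_mem h i
    · intro i _ j _ hij; exact (F.orderEmbOfFin h).injective hij
    · intro b hb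
      have : b ∈ Set.range (F.orderEmbOfFin h) := by
        rw [Finset.range_orderEmbOfFin]; exact hb
      obtain ⟨i, hi⟩ := this
      exact ⟨i, Finset.mem_univ i, hi⟩
    · intro i _; rfl
  rw [he, Finset.sum_range fun i => f i]
  refine Finset.sum_le_sum fun i _ => hf ?_
  exact strictMono_fin_nat_le (F.orderEmbOfFin h).strictMono i

/-- for `0 < p < q = ∞` and a positive non-increasing `λ`,
`σ_n(T_λ : ℓ_p → ℓ_∞, 𝓔) = (∑_{k=1}^{n+1} λ_k^{-p})^{-1/p}`. -/
theorem sigma_diagonal_q_infty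
    (p : ℝ) (hp : 0 < p) (l : ℕ → ℝ) (hl : ∀ k, 0 < l k)
    (hmono : Antitone l) (n : ℕ) :
    sigmaWInf p l n = (∑ k ∈ Finset.range (n + 1), l k ^ (-p)) ^ (-(1 / p)) := by
  set S : ℝ := ∑ k ∈ Finset.range (n + 1), l k ^ (-p) with hS_def
  have hS : 0 < S := Finset.sum_pos
    (fun k _ => Real.rpow_pos_of_pos (hl k) _) ⟨0, by simp⟩
  set c : ℝ := S ^ (-(1 / p)) with hc_def
  have hc : 0 < c := Real.rpow_pos_of_pos hS _
  have hcp : c ^ p = S⁻¹ := by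
    rw [hc_def, ← Real.rpow_mul hS.le]
    have hexp : -(1 / p) * p = -1 := by field_simp
    rw [hexp, Real.rpow_neg_one]
  have hcpS : c ^ p * S = 1 := by rw [hcp, inv_mul_cancel₀ hS.ne']
  have hnorm : ∀ (k : ℕ) (z : ℂ), ‖(l k : ℂ) * z‖ = l k * ‖z‖ := by
    intro k z
    rw [norm_mul, Complex.norm_real, Real.norm_eq_abs, abs_of_pos (hl k)]
  have hfmono : Monotone fun k => l k ^ (-p) := by
    intro a b hab
    exact Real.rpow_le_rpow_of_nonpos (hl b) (hmono hab) (neg_nonpos.mpr hp.le)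
  -- UPPER BOUND: every element of the outer set is ≤ c
  have UB : ∀ s ∈ { s : ℝ | ∃ ξ : ℕ → ℂ,
      Summable (fun k => ‖ξ k‖ ^ p) ∧ (∑' k, ‖ξ k‖ ^ p) ≤ 1 ∧
      s = sInf { t : ℝ | ∃ Γ : Finset ℕ, Γ.card = n ∧
        t = ⨆ k : { k : ℕ // k ∉ Γ }, ‖(l (k : ℕ) : ℂ) * ξ (k : ℕ)‖ } }, s ≤ c := by
    rintro s ⟨ξ, hsum, hle, rfl⟩
    set E : Set ℕ := {k | c < ‖(l k : ℂ) * ξ k‖} with hE_def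
    have key : ∀ F : Finset ℕ, ↑F ⊆ E → F.card ≤ n := by
      intro F hF
      by_contra hcard
      push_neg at hcard
      obtain ⟨F', hF'sub, hF'card⟩ := Finset.exists_subset_card_eq (n := n + 1) hcard
      have hF'E : ↑F' ⊆ E := fun x hx => hF (hF'sub hx)
      have h1 : ∑ k ∈ F', ‖ξ k‖ ^ p ≤ 1 :=
        le_trans (Summable.sum_le_tsum F' (fun k _ => Real.rpow_nonneg (norm_nonneg _) _) hsum) hle
      have h2 : ∀ k ∈ F', c ^ p * l k ^ (-p) < ‖ξ k‖ ^ p := by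
        intro k hk
        have hkE : c < ‖(l k : ℂ) * ξ k‖ := hF'E hk
        rw [hnorm] at hkE
        have hdiv : c / l k < ‖ξ k‖ := (div_lt_iff₀ (hl k)).mpr (by linarith [hkE])
        have hlt := Real.rpow_lt_rpow (div_nonneg hc.le (hl k).le) hdiv hp
        calc c ^ p * l k ^ (-p) = (c / l k) ^ p := by
              rw [Real.div_rpow hc.le (hl k).le, Real.rpow_neg (hl k).le, div_eq_mul_inv]
          _ < ‖ξ k‖ ^ p := hlt
      have h3 : S ≤ ∑ k ∈ F', l k ^ (-p) := sum_range_le_sum_finset hfmono F' hF'card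
      have h4 : c ^ p * S ≤ ∑ k ∈ F', c ^ p * l k ^ (-p) := by
        rw [← Finset.mul_sum]
        exact mul_le_mul_of_nonneg_left h3 (Real.rpow_nonneg hc.le _)
      have h5 : ∑ k ∈ F', c ^ p * l k ^ (-p) < ∑ k ∈ F', ‖ξ k‖ ^ p :=
        Finset.sum_lt_sum_of_nonempty (Finset.card_pos.mp (by omega)) h2
      rw [hcpS] at h4
      linarith
    have hEfin : E.Finite := by
      by_contra hinf
      obtain ⟨t, hts, htc⟩ := Set.Infinite.exists_subset_card_eq hinf (n + 1)
      have := key t hts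
      omega
    have hEcard : hEfin.toFinset.card ≤ n := key _ (by simp)
    obtain ⟨Γ, hΓsub, hΓcard⟩ := Infinite.exists_superset_card_eq hEfin.toFinset n hEcard
    have hne : Nonempty { k : ℕ // k ∉ Γ } := by
      obtain ⟨x, hx⟩ := Infinite.exists_notMem_finset Γ
      exact ⟨⟨x, hx⟩⟩
    have hsup : (⨆ k : { k : ℕ // k ∉ Γ }, ‖(l (k : ℕ) : ℂ) * ξ (k : ℕ)‖) ≤ c := by
      refine ciSup_le fun k => ?_
      by_contra hgt
      push_neg at hgt
      have hkE : (k : ℕ) ∈ E := hgt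
      exact k.2 (hΓsub (hEfin.mem_toFinset.mpr hkE))
    refine csInf_le_of_le ?_ ⟨Γ, hΓcard, rfl⟩ hsup
    refine ⟨0, ?_⟩
    rintro t ⟨Γ', _, rfl⟩
    exact Real.iSup_nonneg fun k => norm_nonneg _
  -- LOWER BOUND: c is in the outer set
  have LB : c ∈ { s : ℝ | ∃ ξ : ℕ → ℂ,
      Summable (fun k => ‖ξ k‖ ^ p) ∧ (∑' k, ‖ξ k‖ ^ p) ≤ 1 ∧
      s = sInf { t : ℝ | ∃ Γ : Finset ℕ, Γ.card = n ∧
        t = ⨆ k : { k : ℕ // k ∉ Γ }, ‖(l (k : ℕ) : ℂ) * ξ (k : ℕ)‖ } } := by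
    set ξ : ℕ → ℂ := fun k => if k ≤ n then ((c / l k : ℝ) : ℂ) else 0 with hξ_def
    have hzero : ∀ k ∉ Finset.range (n + 1), ‖ξ k‖ ^ p = 0 := by
      intro k hk
      rw [Finset.mem_range] at hk
      have hkn : ¬ k ≤ n := by omega
      simp [hξ_def, hkn, Real.zero_rpow hp.ne']
    have hval : ∀ k, k ≤ n → ‖ξ k‖ ^ p = c ^ p * l k ^ (-p) := by
      intro k hk
      simp only [hξ_def, if_pos hk, Complex.norm_real, Real.norm_eq_abs,
        abs_of_nonneg (div_nonneg hc.le (hl k).le)]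
      rw [Real.div_rpow hc.le (hl k).le, Real.rpow_neg (hl k).le, div_eq_mul_inv]
    have hsum : Summable (fun k => ‖ξ k‖ ^ p) := summable_of_ne_finset_zero hzero
    have htsum : (∑' k, ‖ξ k‖ ^ p) = 1 := by
      rw [tsum_eq_sum hzero]
      have hcongr : ∑ k ∈ Finset.range (n + 1), ‖ξ k‖ ^ p
          = ∑ k ∈ Finset.range (n + 1), c ^ p * l k ^ (-p) :=
        Finset.sum_congr rfl fun k hk => hval k (by rw [Finset.mem_range] at hk; omega)
      rw [hcongr, ← Finset.mul_sum, ← hS_def, hcpS]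
    -- the sup over the complement of any Γ of card n equals c
    have hsupc : ∀ Γ : Finset ℕ, Γ.card = n →
        (⨆ k : { k : ℕ // k ∉ Γ }, ‖(l (k : ℕ) : ℂ) * ξ (k : ℕ)‖) = c := by
      intro Γ hΓcard
      obtain ⟨k, hk_le, hkΓ⟩ : ∃ k, k ≤ n ∧ k ∉ Γ := by
        by_contra hcon
        push_neg at hcon
        have hsub : Finset.range (n + 1) ⊆ Γ := by
          intro x hx
          rw [Finset.mem_range] at hx
          exact hcon x (by omega)
        have hcc := Finset.card_le_card hsub
        simp [hΓcard] at hcc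
      have hbound : ∀ j : { k : ℕ // k ∉ Γ }, ‖(l (j : ℕ) : ℂ) * ξ (j : ℕ)‖ ≤ c := by
        intro j
        by_cases hj : (j : ℕ) ≤ n
        · rw [hnorm]
          simp only [hξ_def, if_pos hj, Complex.norm_real, Real.norm_eq_abs,
            abs_of_nonneg (div_nonneg hc.le (hl _).le)]
          rw [mul_div_cancel₀ _ (hl _).ne']
        · simp only [hξ_def, if_neg hj, mul_zero, norm_zero]
          exact hc.le
      have hvalk : ‖(l k : ℂ) * ξ k‖ = c := by
        rw [hnorm]
        simp only [hξ_def, if_pos hk_le, Complex.norm_real, Real.norm_eq_abs,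
          abs_of_nonneg (div_nonneg hc.le (hl _).le)]
        rw [mul_div_cancel₀ _ (hl _).ne']
      haveI : Nonempty { k : ℕ // k ∉ Γ } := ⟨⟨k, hkΓ⟩⟩
      refine le_antisymm (ciSup_le hbound) ?_
      have hle := le_ciSup (f := fun j : { k : ℕ // k ∉ Γ } => ‖(l (j : ℕ) : ℂ) * ξ (j : ℕ)‖)
        ⟨c, by rintro x ⟨j, rfl⟩; exact hbound j⟩ ⟨k, hkΓ⟩
      rw [hvalk] at hle
      exact hle
    refine ⟨ξ, hsum, le_of_eq htsum, ?_⟩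
    have hT : { t : ℝ | ∃ Γ : Finset ℕ, Γ.card = n ∧
        t = ⨆ k : { k : ℕ // k ∉ Γ }, ‖(l (k : ℕ) : ℂ) * ξ (k : ℕ)‖ } = {c} := by
      ext t
      simp only [Set.mem_setOf_eq, Set.mem_singleton_iff]
      constructor
      · rintro ⟨Γ, hΓcard, rfl⟩
        exact hsupc Γ hΓcard
      · rintro rfl
        exact ⟨Finset.range n, Finset.card_range n, (hsupc _ (Finset.card_range n)).symm⟩
    rw [hT, csInf_singleton]
  unfold sigmaWInf
  exact le_antisymm (csSup_le ⟨c, LB⟩ UB) (le_csSup ⟨c, UB⟩ LB)
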